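/- One-step contact property of scheme (4.3) for V(q)=q²/2: with q_j = q_{j-1} + h(1−hα)p_{j-1} − (h²/2)q_{j-1}, p_j = (1−hα)p_{j-1} − (h/2)(q_{j-1}+q_j), and s_j = s_{j-1} + (1/(2h))(q_j−q_{j-1})² − (h/4)(q_j²+q_{j-1}²) − αh s_{j-1} − ε·ΔW, the differential identity ds_j − p_j dq_j = λ (ds_{j-1} − p_{j-1} dq_{j-1}) holds with λ = 1 − αh, where differentials are taken with respect to the initial data (q_{j-1}, p_{j-1}, s_{j-1}) and ΔW is treated as a constant. -/

import Mathlib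

/-- one-step contact property of scheme (4.3) for `V(q)=q²/2`.  Viewing
`(q_j, p_j, s_j)` as smooth functions of the initial data `x = (q_{j-1}, p_{j-1}, s_{j-1})`,
the pullback identity `ds_j − p_j dq_j = (1−αh)(ds_{j-1} − p_{j-1} dq_{j-1})` holds,
stated as an equality of covectors (differentials in the three initial variables). -/
theorem scheme_one_step_contact
    (h α ε ΔW : ℝ) (hh : h ≠ 0)
    (qj pj sj : ℝ × ℝ × ℝ → ℝ)
    (hqj : ∀ x, qj x = x.1 + h * (1 - h * α) * x.2.1 - h ^ 2 / 2 * x.1)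
    (hpj : ∀ x, pj x = (1 - h * α) * x.2.1 - h / 2 * (x.1 + qj x))
    (hsj : ∀ x, sj x = x.2.2 + (1 / (2 * h)) * (qj x - x.1) ^ 2
        - h / 4 * ((qj x) ^ 2 + x.1 ^ 2) - α * h * x.2.2 - ε * ΔW) :
    ∀ (x v : ℝ × ℝ × ℝ),
      fderiv ℝ sj x v - pj x * fderiv ℝ qj x v
        = (1 - α * h) *
          (fderiv ℝ (fun y : ℝ × ℝ × ℝ => y.2.2) x v
            - x.2.1 * fderiv ℝ (fun y : ℝ × ℝ × ℝ => y.1) x v) := by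
  intro x v
  have H1 : HasFDerivAt (fun y : ℝ × ℝ × ℝ => y.1)
      (ContinuousLinearMap.fst ℝ ℝ (ℝ × ℝ)) x := hasFDerivAt_fst
  have H2 : HasFDerivAt (fun y : ℝ × ℝ × ℝ => y.2.1)
      ((ContinuousLinearMap.fst ℝ ℝ ℝ).comp (ContinuousLinearMap.snd ℝ ℝ (ℝ × ℝ))) x :=
    hasFDerivAt_fst.comp x hasFDerivAt_snd
  have H3 : HasFDerivAt (fun y : ℝ × ℝ × ℝ => y.2.2)
      ((ContinuousLinearMap.snd ℝ ℝ ℝ).comp (ContinuousLinearMap.snd ℝ ℝ (ℝ × ℝ))) x :=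
    hasFDerivAt_snd.comp x hasFDerivAt_snd
  have hqfun : qj = fun y : ℝ × ℝ × ℝ => y.1 + h * (1 - h * α) * y.2.1 - h ^ 2 / 2 * y.1 :=
    funext hqj
  have Hq : HasFDerivAt qj
      ((ContinuousLinearMap.fst ℝ ℝ (ℝ × ℝ)
        + (h * (1 - h * α)) •
          ((ContinuousLinearMap.fst ℝ ℝ ℝ).comp (ContinuousLinearMap.snd ℝ ℝ (ℝ × ℝ))))
        - (h ^ 2 / 2) • ContinuousLinearMap.fst ℝ ℝ (ℝ × ℝ)) x := by
    rw [hqfun]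
    exact (H1.add (H2.const_mul _)).sub (H1.const_mul _)
  have hsfun : sj = fun y : ℝ × ℝ × ℝ => y.2.2 + (1 / (2 * h)) * (qj y - y.1) ^ 2
      - h / 4 * ((qj y) ^ 2 + y.1 ^ 2) - α * h * y.2.2 - ε * ΔW := funext hsj
  set Lq := (ContinuousLinearMap.fst ℝ ℝ (ℝ × ℝ)
        + (h * (1 - h * α)) •
          ((ContinuousLinearMap.fst ℝ ℝ ℝ).comp (ContinuousLinearMap.snd ℝ ℝ (ℝ × ℝ))))
        - (h ^ 2 / 2) • ContinuousLinearMap.fst ℝ ℝ (ℝ × ℝ) with hLq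
  have Hsq : HasFDerivAt (fun y : ℝ × ℝ × ℝ => (qj y - y.1) ^ 2)
      ((qj x - x.1) • (Lq - ContinuousLinearMap.fst ℝ ℝ (ℝ × ℝ))
        + (qj x - x.1) • (Lq - ContinuousLinearMap.fst ℝ ℝ (ℝ × ℝ))) x := by
    simp only [pow_two]
    exact (Hq.sub H1).mul (Hq.sub H1)
  have Hq2 : HasFDerivAt (fun y : ℝ × ℝ × ℝ => (qj y) ^ 2)
      ((qj x) • Lq + (qj x) • Lq) x := by
    simp only [pow_two]
    exact Hq.mul Hq
  have H12 : HasFDerivAt (fun y : ℝ × ℝ × ℝ => y.1 ^ 2)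
      (x.1 • ContinuousLinearMap.fst ℝ ℝ (ℝ × ℝ)
        + x.1 • ContinuousLinearMap.fst ℝ ℝ (ℝ × ℝ)) x := by
    simp only [pow_two]
    exact H1.mul H1
  have Hs : HasFDerivAt sj
      (((((ContinuousLinearMap.snd ℝ ℝ ℝ).comp (ContinuousLinearMap.snd ℝ ℝ (ℝ × ℝ))
        + (1 / (2 * h)) • ((qj x - x.1) • (Lq - ContinuousLinearMap.fst ℝ ℝ (ℝ × ℝ))
            + (qj x - x.1) • (Lq - ContinuousLinearMap.fst ℝ ℝ (ℝ × ℝ))))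
        - (h / 4) • (((qj x) • Lq + (qj x) • Lq)
            + (x.1 • ContinuousLinearMap.fst ℝ ℝ (ℝ × ℝ)
              + x.1 • ContinuousLinearMap.fst ℝ ℝ (ℝ × ℝ))))
        - (α * h) • ((ContinuousLinearMap.snd ℝ ℝ ℝ).comp
            (ContinuousLinearMap.snd ℝ ℝ (ℝ × ℝ))))
        - 0) x := by
    rw [hsfun]
    exact (((H3.add (Hsq.const_mul _)).sub ((Hq2.add H12).const_mul _)).sub
      (H3.const_mul _)).sub (hasFDerivAt_const _ _)
  rw [Hq.fderiv, Hs.fderiv, H1.fderiv, H3.fderiv]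
  simp only [ContinuousLinearMap.sub_apply, ContinuousLinearMap.add_apply,
    ContinuousLinearMap.smul_apply, ContinuousLinearMap.comp_apply,
    ContinuousLinearMap.coe_fst', ContinuousLinearMap.coe_snd',
    ContinuousLinearMap.zero_apply, smul_eq_mul, pow_one]
  rw [hpj x, hqj x]
  field_simp
  ring
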